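/- Fix k ∈ ℕ and u, v ∈ B_R with q(u) > 0. Let D_k^{(2)}(u,v,H) := ∑_{i=0}^{k} ‖H Ψ_{t_i}(v) − H Ψ_{t_i}(u)‖₂², and define the unnormalized smoothing density p_k(w) := q(w)·∏_{i=0}^{k} exp(−‖H Ψ_{t_i}(w) − Y_i‖₂²/(2ε²)). Then the probability (over the Gaussian noise) that p_k(v)/p_k(u) ≥ (q(v)/q(u))·exp(−D_k^{(2)}(u,v,H)/(2ε²)) is at least 1/2. -/

import Mathlib

open MeasureTheory ProbabilityTheory Set
open scoped ENNReal

noncomputable section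

lemma map_sum_symm {Ω ι : Type*} [MeasurableSpace Ω] {μ : Measure Ω} [IsProbabilityMeasure μ]
    {X : ι → Ω → ℝ} (hmeas : ∀ i, Measurable (X i))
    (hindep : iIndepFun X μ)
    (hsym : ∀ i, Measure.map (X i) μ = Measure.map (fun ω => -X i ω) μ)
    (s : Finset ι) :
    Measure.map (fun ω => ∑ i ∈ s, X i ω) μ
      = Measure.map (fun ω => -∑ i ∈ s, X i ω) μ := by
  classical
  induction s using Finset.induction_on with
  | empty => simp
  | @insert a s ha ih =>
    have hYm : Measurable (fun ω => ∑ i ∈ s, X i ω) :=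
      Finset.measurable_sum s (fun i _ => hmeas i)
    have hInd : IndepFun (fun ω => ∑ i ∈ s, X i ω) (X a) μ := by
      have hfe : (fun ω => ∑ i ∈ s, X i ω) = ∑ j ∈ s, X j := by
        funext ω; simp
      rw [hfe]
      exact hindep.indepFun_finsetSum_of_notMem hmeas ha
    have hp : μ.map (fun ω => ((∑ i ∈ s, X i ω), X a ω))
        = (μ.map (fun ω => ∑ i ∈ s, X i ω)).prod (μ.map (X a)) :=
      (indepFun_iff_map_prod_eq_prod_map_map hYm.aemeasurable
        (hmeas a).aemeasurable).mp hInd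
    have hInd' : IndepFun (fun ω => -∑ i ∈ s, X i ω) (fun ω => -X a ω) μ :=
      hInd.comp measurable_neg measurable_neg
    have hp' : μ.map (fun ω => ((-∑ i ∈ s, X i ω), -X a ω))
        = (μ.map (fun ω => -∑ i ∈ s, X i ω)).prod (μ.map (fun ω => -X a ω)) :=
      (indepFun_iff_map_prod_eq_prod_map_map hYm.neg.aemeasurable
        (hmeas a).neg.aemeasurable).mp hInd'
    have hpair : μ.map (fun ω => ((∑ i ∈ s, X i ω), X a ω))
        = μ.map (fun ω => ((-∑ i ∈ s, X i ω), -X a ω)) := by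
      rw [hp, hp', ← ih, ← hsym a]
    calc μ.map (fun ω => ∑ i ∈ insert a s, X i ω)
        = (μ.map (fun ω => ((∑ i ∈ s, X i ω), X a ω))).map
            (fun p : ℝ × ℝ => p.1 + p.2) := by
          rw [Measure.map_map (g := fun p : ℝ × ℝ => p.1 + p.2)
            (f := fun ω => ((∑ i ∈ s, X i ω), X a ω)) (measurable_fst.add measurable_snd)
            (hYm.prodMk (hmeas a))]
          congr 1; funext ω
          simp [Finset.sum_insert ha, add_comm]
      _ = (μ.map (fun ω => ((-∑ i ∈ s, X i ω), -X a ω))).map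
            (fun p : ℝ × ℝ => p.1 + p.2) := by rw [hpair]
      _ = μ.map (fun ω => -∑ i ∈ insert a s, X i ω) := by
          rw [Measure.map_map (g := fun p : ℝ × ℝ => p.1 + p.2)
            (f := fun ω => ((-∑ i ∈ s, X i ω), -X a ω)) (measurable_fst.add measurable_snd)
            (hYm.neg.prodMk (hmeas a).neg)]
          congr 1; funext ω
          simp [Finset.sum_insert ha]

lemma half_le_prob_nonneg {Ω : Type*} [MeasurableSpace Ω] (μ : Measure Ω)
    [IsProbabilityMeasure μ] (S : Ω → ℝ) (hS : Measurable S)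
    (hsym : Measure.map S μ = Measure.map (fun ω => -S ω) μ) :
    (1 : ℝ≥0∞) / 2 ≤ μ {ω | 0 ≤ S ω} := by
  have h1 : μ {ω | 0 ≤ S ω} = (μ.map S) (Ici 0) := by
    rw [Measure.map_apply hS measurableSet_Ici]; rfl
  have h2 : μ {ω | S ω ≤ 0} = (μ.map S) (Ici 0) := by
    rw [hsym, Measure.map_apply (f := fun ω => -S ω) hS.neg measurableSet_Ici]
    congr 1; ext ω; simp [neg_nonneg]
  have hcov : (1 : ℝ≥0∞) ≤ μ {ω | 0 ≤ S ω} + μ {ω | S ω ≤ 0} := by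
    have huniv : ({ω | 0 ≤ S ω} ∪ {ω | S ω ≤ 0}) = Set.univ := by
      ext ω; simpa using le_total 0 (S ω)
    calc (1 : ℝ≥0∞) = μ Set.univ := measure_univ.symm
      _ = μ ({ω | 0 ≤ S ω} ∪ {ω | S ω ≤ 0}) := by rw [huniv]
      _ ≤ _ := measure_union_le _ _
  rw [h1]
  rw [h1, h2, ← two_mul] at hcov
  rw [mul_comm] at hcov
  exact ENNReal.div_le_of_le_mul hcov


/-- The (un-normalised) smoothing density after observations
`Y_i = H Ψ_{t_i}(u) + Z_i(ω)`, `0 ≤ i ≤ k`, for Gaussian observation noise with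
covariance `ε²` times the identity:
`p_k(w) = q(w) ∏_{i=0}^k exp(-‖H Ψ_{t_i}(w) - Y_i‖² / (2ε²))`. -/
def smootherDensity {d dO : ℕ} {Ω : Type*}
    (Ψ : ℝ → EuclideanSpace ℝ (Fin d) → EuclideanSpace ℝ (Fin d))
    (H : EuclideanSpace ℝ (Fin d) →L[ℝ] EuclideanSpace ℝ (Fin dO))
    (q : EuclideanSpace ℝ (Fin d) → ℝ) (h ε : ℝ)
    (u : EuclideanSpace ℝ (Fin d)) (Z : ℕ → Ω → EuclideanSpace ℝ (Fin dO))
    (k : ℕ) (w : EuclideanSpace ℝ (Fin d)) (ω : Ω) : ℝ :=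
  q w * ∏ i ∈ Finset.range (k + 1),
    Real.exp (-‖H (Ψ (i * h) w) - (H (Ψ (i * h) u) + Z i ω)‖ ^ 2 / (2 * ε ^ 2))

/-- for Gaussian observation noise, with probability at least
`1/2` the likelihood ratio of a fixed point `v` against the true initial
condition `u` is at least `(q(v)/q(u)) exp(-D_k^{(2)}(u,v,H)/(2ε²))`. -/
theorem prob_likelihood_ratio_gaussian {d dO : ℕ}
    (A : EuclideanSpace ℝ (Fin d) →L[ℝ] EuclideanSpace ℝ (Fin d))
    (B : EuclideanSpace ℝ (Fin d) →L[ℝ] EuclideanSpace ℝ (Fin d) →L[ℝ] EuclideanSpace ℝ (Fin d))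
    (f : EuclideanSpace ℝ (Fin d))
    (R δ : ℝ) (hR : 0 < R) (hδ : 0 < δ)
    (htrap : ∀ x : EuclideanSpace ℝ (Fin d),
      ‖x‖ ∈ Icc R (R + δ) → inner ℝ (f - A x - B x x) x ≤ 0)
    (Ψ : ℝ → EuclideanSpace ℝ (Fin d) → EuclideanSpace ℝ (Fin d))
    (hΨ0 : ∀ x, ‖x‖ ≤ R → Ψ 0 x = x)
    (hΨR : ∀ x, ‖x‖ ≤ R → ∀ t : ℝ, 0 ≤ t → ‖Ψ t x‖ ≤ R)
    (hΨode : ∀ x, ‖x‖ ≤ R → ∀ t : ℝ, 0 ≤ t →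
      HasDerivWithinAt (fun s => Ψ s x)
        (f - A (Ψ t x) - B (Ψ t x) (Ψ t x)) (Ici 0) t)
    (h : ℝ) (hh : 0 < h)
    (H : EuclideanSpace ℝ (Fin d) →L[ℝ] EuclideanSpace ℝ (Fin dO))
    (ε : ℝ) (hε : 0 < ε)
    (Ω : Type*) [MeasurableSpace Ω] (μ : Measure Ω) [IsProbabilityMeasure μ]
    (Z : ℕ → Ω → EuclideanSpace ℝ (Fin dO))
    (hZmeas : ∀ i, Measurable (Z i))
    (hZindep : iIndepFun
      (fun p : ℕ × Fin dO => fun ω => Z p.1 ω p.2) μ)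
    (hZlaw : ∀ i : ℕ, ∀ j : Fin dO,
      Measure.map (fun ω => Z i ω j) μ = gaussianReal 0 (Real.toNNReal ε ^ 2))
    (q : EuclideanSpace ℝ (Fin d) → ℝ) (hq : ∀ x, 0 ≤ q x)
    (hqsupp : ∀ x : EuclideanSpace ℝ (Fin d), ¬ ‖x‖ ≤ R → q x = 0)
    (u : EuclideanSpace ℝ (Fin d)) (hu : ‖u‖ ≤ R) (hqu : 0 < q u)
    (v : EuclideanSpace ℝ (Fin d)) (hv : ‖v‖ ≤ R)
    (k : ℕ) :
    (1 : ℝ≥0∞) / 2 ≤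
      μ {ω | (q v / q u) * Real.exp
          (-(∑ i ∈ Finset.range (k + 1), ‖H (Ψ (i * h) v) - H (Ψ (i * h) u)‖ ^ 2) /
            (2 * ε ^ 2)) ≤
        smootherDensity Ψ H q h ε u Z k v ω / smootherDensity Ψ H q h ε u Z k u ω} := by
  classical
  set δ : ℕ → EuclideanSpace ℝ (Fin dO) :=
    fun i => H (Ψ (i * h) v) - H (Ψ (i * h) u) with hδdef
  set X : ℕ × Fin dO → Ω → ℝ := fun p ω => δ p.1 p.2 * Z p.1 ω p.2 with hXdef
  set s : Finset (ℕ × Fin dO) := Finset.range (k + 1) ×ˢ Finset.univ with hsdef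
  have hZm : ∀ p : ℕ × Fin dO, Measurable fun ω => Z p.1 ω p.2 :=
    fun p => (measurable_pi_apply p.2).comp ((WithLp.measurable_ofLp 2 _).comp (hZmeas p.1))
  have hXm : ∀ p, Measurable (X p) := fun p => (hZm p).const_mul _
  have hXindep : iIndepFun X μ :=
    hZindep.comp (fun p x => δ p.1 p.2 * x) (fun p => measurable_const_mul _)
  have hXsym : ∀ p, Measure.map (X p) μ = Measure.map (fun ω => -X p ω) μ := by
    intro p
    have h1 : Measure.map (X p) μ
        = (gaussianReal 0 (Real.toNNReal ε ^ 2)).map (δ p.1 p.2 * ·) := by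
      rw [← hZlaw p.1 p.2, Measure.map_map (measurable_const_mul _) (hZm p)]
      rfl
    have h2 : Measure.map (fun ω => -X p ω) μ
        = (gaussianReal 0 (Real.toNNReal ε ^ 2)).map ((-(δ p.1 p.2)) * ·) := by
      rw [← hZlaw p.1 p.2, Measure.map_map (measurable_const_mul _) (hZm p)]
      congr 1
      funext ω
      simp [hXdef]
    rw [h1, h2, gaussianReal_map_const_mul, gaussianReal_map_const_mul]
    norm_num [neg_sq]
  have hhalf : (1 : ℝ≥0∞) / 2 ≤ μ {ω | 0 ≤ ∑ p ∈ s, X p ω} :=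
    half_le_prob_nonneg μ _ (Finset.measurable_sum s (fun p _ => hXm p))
      (map_sum_symm hXm hXindep hXsym s)
  refine le_trans hhalf (measure_mono ?_)
  intro ω hω
  simp only [Set.mem_setOf_eq] at hω ⊢
  -- translate the sign condition into nonnegativity of the sum of inner products
  have hT : (0 : ℝ) ≤ ∑ i ∈ Finset.range (k + 1), inner ℝ (δ i) (Z i ω) := by
    refine le_of_le_of_eq hω ?_
    rw [hsdef, Finset.sum_product]
    refine Finset.sum_congr rfl fun i _ => ?_
    rw [PiLp.inner_apply]
    simp [hXdef, RCLike.inner_apply, conj_trivial, mul_comm]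
  have hε2 : (0 : ℝ) < 2 * ε ^ 2 := by positivity
  have e1 : ∏ i ∈ Finset.range (k + 1),
      Real.exp (-‖H (Ψ (i * h) v) - (H (Ψ (i * h) u) + Z i ω)‖ ^ 2 / (2 * ε ^ 2))
      = Real.exp (∑ i ∈ Finset.range (k + 1), -‖δ i - Z i ω‖ ^ 2 / (2 * ε ^ 2)) := by
    refine (Finset.prod_congr rfl fun i _ => ?_).trans
      (Real.exp_sum _ (fun i => -‖δ i - Z i ω‖ ^ 2 / (2 * ε ^ 2))).symm
    have hv : H (Ψ (i * h) v) - (H (Ψ (i * h) u) + Z i ω) = δ i - Z i ω := by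
      simp only [hδdef]; abel
    rw [hv]
  have e2 : ∏ i ∈ Finset.range (k + 1),
      Real.exp (-‖H (Ψ (i * h) u) - (H (Ψ (i * h) u) + Z i ω)‖ ^ 2 / (2 * ε ^ 2))
      = Real.exp (∑ i ∈ Finset.range (k + 1), -‖Z i ω‖ ^ 2 / (2 * ε ^ 2)) := by
    refine (Finset.prod_congr rfl fun i _ => ?_).trans
      (Real.exp_sum _ (fun i => -‖Z i ω‖ ^ 2 / (2 * ε ^ 2))).symm
    rw [show H (Ψ (i * h) u) - (H (Ψ (i * h) u) + Z i ω) = -(Z i ω) by abel, norm_neg]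
  have key : (∑ i ∈ Finset.range (k + 1), -‖δ i - Z i ω‖ ^ 2 / (2 * ε ^ 2))
      - ∑ i ∈ Finset.range (k + 1), -‖Z i ω‖ ^ 2 / (2 * ε ^ 2)
      = (2 * (∑ i ∈ Finset.range (k + 1), inner ℝ (δ i) (Z i ω))
        - ∑ i ∈ Finset.range (k + 1), ‖δ i‖ ^ 2) / (2 * ε ^ 2) := by
    rw [← Finset.sum_sub_distrib, Finset.mul_sum, ← Finset.sum_sub_distrib, Finset.sum_div]
    refine Finset.sum_congr rfl fun i _ => ?_
    have hns := norm_sub_sq_real (δ i) (Z i ω)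
    rw [div_sub_div_same]
    congr 1
    linear_combination -hns
  simp only [smootherDensity]
  rw [e1, e2, mul_div_mul_comm, ← Real.exp_sub, key]
  refine mul_le_mul_of_nonneg_left ?_ (div_nonneg (hq v) (hq u))
  rw [Real.exp_le_exp]
  have hD : ∑ i ∈ Finset.range (k + 1), ‖H (Ψ (i * h) v) - H (Ψ (i * h) u)‖ ^ 2
      = ∑ i ∈ Finset.range (k + 1), ‖δ i‖ ^ 2 := by
    simp only [hδdef]
  rw [hD]
  gcongr
  linarith
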